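/- Fix h ∈ ℝ and J > 0. For every m ∈ ℝ, the second derivative of the variational pressure satisfies ∂² p̃(m) + 2J = (2J)²·g'(2Jm + h − J), and this quantity is strictly positive. Consequently, at any point m with λ := ∂² p̃(m) < 0 one has −λ^{−1} − (2J)^{−1} > 0. -/

import Mathlib

open MeasureTheory Filter Real

noncomputable section

/-- `g(h) = (e^h/2)(√(e^{2h}+4) − e^h)`. -/
def gFun (h : ℝ) : ℝ := Real.exp h / 2 * (Real.sqrt (Real.exp (2*h) + 4) - Real.exp h)

/-- `p⁰(h) = −(1−g(h))/2 − (1/2)·log(1−g(h))`. -/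
def p0 (h : ℝ) : ℝ := -(1 - gFun h)/2 - (1/2) * Real.log (1 - gFun h)

/-- Variational pressure `p̃(m) = −Jm² + p⁰((2m−1)J + h)`. -/
def ptilde (h J m : ℝ) : ℝ := -J * m^2 + p0 ((2*m - 1) * J + h)

/-- Explicit derivative of `gFun`. -/
def gD (h : ℝ) : ℝ := Real.exp h * (Real.sqrt (Real.exp (2*h) + 4) - Real.exp h)^2
  / (2 * Real.sqrt (Real.exp (2*h) + 4))

lemma exp2 (h : ℝ) : Real.exp (2*h) = Real.exp h ^ 2 := by
  rw [show 2*h = h + h by ring, Real.exp_add]; ring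

lemma sqrt_pos' (h : ℝ) : 0 < Real.sqrt (Real.exp (2*h) + 4) := by positivity

lemma exp_lt_sqrt (h : ℝ) : Real.exp h < Real.sqrt (Real.exp (2*h) + 4) := by
  have h2 := Real.sq_sqrt (show (0:ℝ) ≤ Real.exp (2*h) + 4 by positivity)
  nlinarith [sqrt_pos' h, Real.exp_pos h, exp2 h]

lemma sqrt_sq' (h : ℝ) :
    Real.sqrt (Real.exp (2*h) + 4) ^ 2 = Real.exp h ^ 2 + 4 := by
  rw [Real.sq_sqrt (show (0:ℝ) ≤ Real.exp (2*h) + 4 by positivity), exp2]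

lemma gD_pos (h : ℝ) : 0 < gD h := by
  have h1 := exp_lt_sqrt h
  exact div_pos (mul_pos (Real.exp_pos h) (pow_pos (by linarith) 2)) (by linarith [sqrt_pos' h])

lemma hasDerivAt_gFun (h : ℝ) : HasDerivAt gFun (gD h) h := by
  have hs : 0 < Real.sqrt (Real.exp (2*h) + 4) := sqrt_pos' h
  have harg : HasDerivAt (fun x : ℝ => Real.exp (2*x) + 4) (Real.exp (2*h) * 2) h := by
    simpa using (((hasDerivAt_id h).const_mul (2:ℝ)).exp).add_const (4:ℝ)
  have hsq := harg.sqrt (by positivity)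
  have hE := Real.hasDerivAt_exp h
  have := ((hE.div_const 2).mul (hsq.sub hE))
  refine this.congr_deriv ?_
  simp only [Pi.sub_apply]
  unfold gD
  rw [exp2]
  field_simp
  ring

lemma gFun_lt_one (h : ℝ) : gFun h < 1 := by
  have h1 := exp_lt_sqrt h
  have h2 := Real.sq_sqrt (show (0:ℝ) ≤ Real.exp (2*h) + 4 by positivity)
  have h3 := Real.exp_pos h
  have h4 := sqrt_pos' h
  unfold gFun
  nlinarith [exp2 h]

lemma one_sub_gFun (h : ℝ) :
    1 - gFun h = (Real.sqrt (Real.exp (2*h) + 4) - Real.exp h)^2 / 4 := by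
  have h2 := sqrt_sq' h
  unfold gFun
  linear_combination (-1/4 : ℝ) * h2

lemma key_alg (E s : ℝ) (hs : s ≠ 0) (hse : s - E ≠ 0) (h2 : s^2 = E^2+4) :
    E/2*(s-E) = -(-(E*(s-E)^2/(2*s)) / 2) - 1/2 * (-(E*(s-E)^2/(2*s)) / ((s-E)^2/4)) := by
  field_simp
  linear_combination E * h2

lemma hasDerivAt_p0 (h : ℝ) : HasDerivAt p0 (gFun h) h := by
  have hg := hasDerivAt_gFun h
  have hpos : 0 < 1 - gFun h := by have := gFun_lt_one h; linarith
  have hne : 1 - gFun h ≠ 0 := ne_of_gt hpos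
  have hinner : HasDerivAt (fun x => 1 - gFun x) (-gD h) h := hg.const_sub 1
  have hlog := hinner.log hne
  have := ((hinner.div_const 2).neg).sub (hlog.const_mul (1/2 : ℝ))
  convert this using 1
  · rfl
  · rfl
  · funext x; simp only [p0, Pi.sub_apply, Pi.neg_apply]; ring
  · rw [one_sub_gFun]
    have hse : Real.sqrt (Real.exp (2*h) + 4) - Real.exp h ≠ 0 := by
      have := exp_lt_sqrt h; linarith
    unfold gFun gD
    exact key_alg _ _ (ne_of_gt (sqrt_pos' h)) hse (sqrt_sq' h)

lemma hasDerivAt_affine (h J m : ℝ) :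
    HasDerivAt (fun m : ℝ => (2*m - 1)*J + h) (2*J) m := by
  simpa using ((((hasDerivAt_id m).const_mul (2:ℝ)).sub_const 1).mul_const J).add_const h

lemma hasDerivAt_ptilde (h J m : ℝ) :
    HasDerivAt (ptilde h J) (-J*(2*m) + gFun ((2*m - 1)*J + h) * (2*J)) m := by
  have hp := (hasDerivAt_p0 ((2*m - 1)*J + h)).comp m (hasDerivAt_affine h J m)
  have hsq : HasDerivAt (fun m : ℝ => -J * m^2) (-J*(2*m)) m := by
    simpa using (hasDerivAt_pow 2 m).const_mul (-J)
  unfold ptilde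
  exact hsq.add hp

lemma deriv_ptilde (h J : ℝ) :
    deriv (ptilde h J) = fun m => -J*(2*m) + gFun ((2*m - 1)*J + h) * (2*J) :=
  funext fun m => (hasDerivAt_ptilde h J m).deriv

lemma iteratedDeriv_two_ptilde (h J m : ℝ) :
    iteratedDeriv 2 (ptilde h J) m = -J*2 + (gD ((2*m - 1)*J + h) * (2*J)) * (2*J) := by
  rw [iteratedDeriv_succ, iteratedDeriv_one, deriv_ptilde]
  have h1 : HasDerivAt (fun m : ℝ => -J*(2*m)) (-J*2) m := by
    simpa using ((hasDerivAt_id m).const_mul (2:ℝ)).const_mul (-J)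
  have h2 : HasDerivAt (fun m : ℝ => gFun ((2*m - 1)*J + h) * (2*J))
      ((gD ((2*m - 1)*J + h) * (2*J)) * (2*J)) m := by
    exact ((hasDerivAt_gFun ((2*m - 1)*J + h)).comp m (hasDerivAt_affine h J m)).mul_const (2*J)
  exact (h1.add h2).deriv

/-- `∂²p̃(m) + 2J = (2J)²·g'(2Jm + h − J) > 0`; hence at any point
with `λ = ∂²p̃(m) < 0`, one has `−λ⁻¹ − (2J)⁻¹ > 0`. -/
theorem ptilde_second_derivative_identity (h J : ℝ) (hJ : 0 < J) :
    (∀ m : ℝ,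
      iteratedDeriv 2 (ptilde h J) m + 2*J = (2*J)^2 * deriv gFun (2*J*m + h - J) ∧
      0 < iteratedDeriv 2 (ptilde h J) m + 2*J) ∧
    (∀ m : ℝ, iteratedDeriv 2 (ptilde h J) m < 0 →
      0 < -(iteratedDeriv 2 (ptilde h J) m)⁻¹ - (2*J)⁻¹) := by
  have main : ∀ m : ℝ,
      iteratedDeriv 2 (ptilde h J) m + 2*J = (2*J)^2 * deriv gFun (2*J*m + h - J) ∧
      0 < iteratedDeriv 2 (ptilde h J) m + 2*J := by
    intro m
    have harg : 2*J*m + h - J = (2*m - 1)*J + h := by ring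
    have hderiv : deriv gFun ((2*m - 1)*J + h) = gD ((2*m - 1)*J + h) :=
      (hasDerivAt_gFun _).deriv
    constructor
    · rw [iteratedDeriv_two_ptilde, harg, hderiv]; ring
    · rw [iteratedDeriv_two_ptilde]
      have hg := gD_pos ((2*m - 1)*J + h)
      have := mul_pos (mul_pos hg (show (0:ℝ) < 2*J by linarith)) (show (0:ℝ) < 2*J by linarith)
      linarith
  refine ⟨main, fun m hm => ?_⟩
  set l := iteratedDeriv 2 (ptilde h J) m with hl
  have h2 := (main m).2
  have hlt : (2*J)⁻¹ < (-l)⁻¹ := by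
    apply inv_strictAnti₀ (by linarith) (by linarith)
  have : (-l)⁻¹ = -(l⁻¹) := by rw [inv_neg]
  linarith [hlt, this ▸ hlt]

end
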